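/- Let P be a nonempty compact convex set in R^3 such that the standard basis (e_1, e_2, e_3) is reduced with respect to P and w_{e_3}(P) >= w_{e_1}(P) + w_{e_2}(P). Then for any h = a*h_1 + b*h_2 + c*h_3 with a,b in {1,-1} and c in {2,-2} (writing h_1=e_1, h_2=e_2, h_3=e_3), we have w_h(P) >= w_{e_3}(P). -/
import Mathlib


open scoped BigOperators

/-- Width of a set `P ⊆ ℝ^d` in direction `h`. -/
noncomputable def width {d : ℕ} (P : Set (Fin d → ℝ)) (h : Fin d → ℝ) : ℝ :=
  sSup ((fun x => ∑ i, h i * x i) '' P) - sInf ((fun x => ∑ i, h i * x i) '' P)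

/-- Cast an integer vector to a real vector. -/
def zcast {d : ℕ} (h : Fin d → ℤ) : Fin d → ℝ := fun i => (h i : ℝ)

/-- A lattice polytope: the convex hull of a nonempty finite set of integer points. -/
def IsLatticePolytope {d : ℕ} (P : Set (Fin d → ℝ)) : Prop :=
  ∃ V : Finset (Fin d → ℝ), V.Nonempty ∧ (∀ v ∈ V, ∀ i, ∃ n : ℤ, v i = (n : ℝ)) ∧
    P = convexHull ℝ (V : Set (Fin d → ℝ))

/-- `l₁` of a subset of `ℝ³`. -/
noncomputable def lone3 (P : Set (Fin 3 → ℝ)) : ℝ :=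
  sSup ((fun x => x 0 + x 1 + x 2) '' P) - sInf ((fun x => x 0) '' P) -
    sInf ((fun x => x 1) '' P) - sInf ((fun x => x 2) '' P)

/-- `l₁` of a subset of `ℝ²`. -/
noncomputable def lone2 (P : Set (Fin 2 → ℝ)) : ℝ :=
  sSup ((fun x => x 0 + x 1) '' P) - sInf ((fun x => x 0) '' P) - sInf ((fun x => x 1) '' P)

/-- Lattice size of a subset of `ℝ³` with respect to the standard simplex. -/
noncomputable def lsDelta3 (P : Set (Fin 3 → ℝ)) : ℝ :=
  sInf {r : ℝ | ∃ A : Matrix (Fin 3) (Fin 3) ℤ, IsUnit A.det ∧ ∃ v : Fin 3 → ℤ,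
    r = lone3 ((fun x => Matrix.mulVec (A.map (Int.cast : ℤ → ℝ)) x + zcast v) '' P)}

/-- Lattice size of a subset of `ℝ²` with respect to the standard simplex. -/
noncomputable def lsDelta2 (P : Set (Fin 2 → ℝ)) : ℝ :=
  sInf {r : ℝ | ∃ A : Matrix (Fin 2) (Fin 2) ℤ, IsUnit A.det ∧ ∃ v : Fin 2 → ℤ,
    r = lone2 ((fun x => Matrix.mulVec (A.map (Int.cast : ℤ → ℝ)) x + zcast v) '' P)}

theorem reduced_large_combinations (P : Set (Fin 3 → ℝ)) (hne : P.Nonempty)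
    (hcpt : IsCompact P) (hconv : Convex ℝ P)
    (e1 e2 e3 : Fin 3 → ℝ) (he1 : e1 = Pi.single 0 1) (he2 : e2 = Pi.single 1 1)
    (he3 : e3 = Pi.single 2 1)
    (r1 : width P e1 ≤ width P e2) (r2 : width P e2 ≤ width P e3)
    (r3 : width P e2 ≤ width P (e1 + e2)) (r4 : width P e2 ≤ width P (e1 - e2))
    (r5 : ∀ m n : ℤ, width P e3 ≤ width P ((m : ℝ) • e1 + (n : ℝ) • e2 + e3))
    (big : width P e1 + width P e2 ≤ width P e3)
    (a b c : ℤ) (ha : a = 1 ∨ a = -1) (hb : b = 1 ∨ b = -1) (hc : c = 2 ∨ c = -2) :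
    width P e3 ≤ width P ((a : ℝ) • e1 + (b : ℝ) • e2 + (c : ℝ) • e3) := by
  have cont : ∀ h : Fin 3 → ℝ, Continuous (fun x : Fin 3 → ℝ => ∑ i, h i * x i) :=
    fun h => continuous_finset_sum _ fun i _ => continuous_const.mul (continuous_apply i)
  have bddA : ∀ h : Fin 3 → ℝ, BddAbove ((fun x => ∑ i, h i * x i) '' P) :=
    fun h => (hcpt.image (cont h)).bddAbove
  have bddB : ∀ h : Fin 3 → ℝ, BddBelow ((fun x => ∑ i, h i * x i) '' P) :=
    fun h => (hcpt.image (cont h)).bddBelow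
  have hub : ∀ h : Fin 3 → ℝ, ∀ x ∈ P,
      (∑ i, h i * x i) ≤ sSup ((fun x => ∑ i, h i * x i) '' P) :=
    fun h x hx => le_csSup (bddA h) ⟨x, hx, rfl⟩
  have hlb : ∀ h : Fin 3 → ℝ, ∀ x ∈ P,
      sInf ((fun x => ∑ i, h i * x i) '' P) ≤ ∑ i, h i * x i :=
    fun h x hx => csInf_le (bddB h) ⟨x, hx, rfl⟩
  obtain ⟨xM, hxM, hmax⟩ := hcpt.exists_isMaxOn hne (cont e3).continuousOn
  obtain ⟨xm, hxm, hmin⟩ := hcpt.exists_isMinOn hne (cont e3).continuousOn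
  have hSup3 : sSup ((fun x => ∑ i, e3 i * x i) '' P) = ∑ i, e3 i * xM i :=
    le_antisymm (csSup_le (hne.image _) (by rintro y ⟨x, hx, rfl⟩; exact hmax hx))
      (hub e3 xM hxM)
  have hInf3 : sInf ((fun x => ∑ i, e3 i * x i) '' P) = ∑ i, e3 i * xm i :=
    le_antisymm (hlb e3 xm hxm)
      (le_csInf (hne.image _) (by rintro y ⟨x, hx, rfl⟩; exact hmin hx))
  set A : ℝ := (∑ i, e1 i * xM i) - (∑ i, e1 i * xm i) with hA
  set B : ℝ := (∑ i, e2 i * xM i) - (∑ i, e2 i * xm i) with hB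
  have hC : width P e3 = (∑ i, e3 i * xM i) - (∑ i, e3 i * xm i) := by
    rw [width, hSup3, hInf3]
  have hA1 : A ≤ width P e1 := by
    have := hub e1 xM hxM; have := hlb e1 xm hxm
    rw [width]; rw [hA]; linarith
  have hA2 : -width P e1 ≤ A := by
    have := hub e1 xm hxm; have := hlb e1 xM hxM
    rw [width]; rw [hA]; linarith
  have hB1 : B ≤ width P e2 := by
    have := hub e2 xM hxM; have := hlb e2 xm hxm
    rw [width]; rw [hB]; linarith
  have hB2 : -width P e2 ≤ B := by
    have := hub e2 xm hxm; have := hlb e2 xM hxM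
    rw [width]; rw [hB]; linarith
  set h : Fin 3 → ℝ := (a : ℝ) • e1 + (b : ℝ) • e2 + (c : ℝ) • e3 with hh
  have expand : ∀ x : Fin 3 → ℝ, ∑ i, h i * x i =
      (a : ℝ) * (∑ i, e1 i * x i) + (b : ℝ) * (∑ i, e2 i * x i)
        + (c : ℝ) * (∑ i, e3 i * x i) := by
    intro x
    simp only [hh, Pi.add_apply, Pi.smul_apply, smul_eq_mul, add_mul,
      Finset.sum_add_distrib, Finset.mul_sum, mul_assoc]
  have hwh1 : (a : ℝ) * A + (b : ℝ) * B + (c : ℝ) * (width P e3) ≤ width P h := by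
    have h1 := hub h xM hxM; have h2 := hlb h xm hxm
    rw [expand] at h1 h2
    rw [hA, hB, hC, width]; ring_nf at h1 h2 ⊢; linarith
  have hwh2 : -((a : ℝ) * A + (b : ℝ) * B + (c : ℝ) * (width P e3)) ≤ width P h := by
    have h1 := hub h xm hxm; have h2 := hlb h xM hxM
    rw [expand] at h1 h2
    rw [hA, hB, hC, width]; ring_nf at h1 h2 ⊢; linarith
  rcases ha with rfl | rfl <;> rcases hb with rfl | rfl <;> rcases hc with rfl | rfl <;>
    push_cast at hwh1 hwh2 <;> linarith
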